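/- Let G = (C, μ) be a complete n-weighted tournament with |C| = m candidates, let w ∈ MM(G) be a maximin winner of G with maximin score σ_w, and set t = min(σ_w, ⌊n/2⌋). Then every smallest minimal support X for w ∈ MM(G) satisfies |X| = n(m − 1) − t · |{c ∈ C : μ(w, c) ≥ n − t}|. -/
import Mathlib


/-- `μ` is a partial `n`-weighted tournament on `C`. -/
def IsPartialW {C : Type*} (n : ℕ) (μ : C → C → ℕ) : Prop :=
  (∀ x, μ x x = 0) ∧ ∀ x y : C, x ≠ y → μ x y + μ y x ≤ n

/-- `μ` is a complete `n`-weighted tournament on `C`. -/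
def IsCompleteW {C : Type*} (n : ℕ) (μ : C → C → ℕ) : Prop :=
  (∀ x, μ x x = 0) ∧ ∀ x y : C, x ≠ y → μ x y + μ y x = n

/-- `μ'` extends `μ` (pointwise larger weights), i.e. `μ ⊆ μ'`. -/
def ExtW {C : Type*} (μ μ' : C → C → ℕ) : Prop :=
  ∀ x y : C, μ x y ≤ μ' x y

/-- The size of a partial weighted tournament: total weight of all its edges. -/
def sizeW {C : Type*} [Fintype C] (μ : C → C → ℕ) : ℕ :=
  ∑ x : C, ∑ y : C, μ x y

/-- The maximin score of `c` in `μ`: its worst performance `min_{c' ≠ c} μ(c,c')`. -/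
noncomputable def mmScore {C : Type*} (μ : C → C → ℕ) (c : C) : ℕ :=
  sInf {k : ℕ | ∃ c' : C, c' ≠ c ∧ μ c c' = k}

/-- `c` is a maximin winner: its maximin score is maximal. -/
def InMM {C : Type*} (μ : C → C → ℕ) (c : C) : Prop :=
  ∀ c' : C, mmScore μ c' ≤ mmScore μ c

/-- `w` is a necessary winner of maximin in the partial `n`-weighted tournament `μX`. -/
def NWMM {C : Type*} (n : ℕ) (μX : C → C → ℕ) (w : C) : Prop :=
  ∀ μ' : C → C → ℕ, ExtW μX μ' → IsCompleteW n μ' → InMM μ' w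

/-- `μX` is a minimal support for `w ∈ MM(μ)`. -/
def MSMM {C : Type*} (n : ℕ) (μ μX : C → C → ℕ) (w : C) : Prop :=
  ExtW μX μ ∧ NWMM n μX w ∧
    ∀ μY : C → C → ℕ, ExtW μY μX → μY ≠ μX → ¬ NWMM n μY w

/-- `μX` is a smallest minimal support for `w ∈ MM(μ)`. -/
def SMSMM {C : Type*} [Fintype C] (n : ℕ) (μ μX : C → C → ℕ) (w : C) : Prop :=
  MSMM n μ μX w ∧ ∀ μY : C → C → ℕ, MSMM n μ μY w → sizeW μX ≤ sizeW μY

section Aux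
open Finset
variable {C : Type*} [Fintype C] [DecidableEq C]

lemma mmScore_le_of_ne {μ : C → C → ℕ} {c c' : C} (h : c' ≠ c) : mmScore μ c ≤ μ c c' :=
  Nat.sInf_le ⟨c', h, rfl⟩

lemma exists_mmScore_eq {μ : C → C → ℕ} {c : C} (h : ∃ c' : C, c' ≠ c) :
    ∃ c', c' ≠ c ∧ μ c c' = mmScore μ c := by
  obtain ⟨c₀, hc₀⟩ := h
  exact Nat.sInf_mem (s := {k : ℕ | ∃ c' : C, c' ≠ c ∧ μ c c' = k}) ⟨μ c c₀, c₀, hc₀, rfl⟩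

lemma le_mmScore {μ : C → C → ℕ} {c : C} {k : ℕ} (hne : ∃ c' : C, c' ≠ c)
    (h : ∀ c', c' ≠ c → k ≤ μ c c') : k ≤ mmScore μ c := by
  obtain ⟨c', hc', he⟩ := exists_mmScore_eq (μ := μ) hne
  exact he ▸ h c' hc'

/-- Adversarial completion: minimizes `w`'s outgoing weights, maximizes `c`'s. -/
noncomputable def advC (n : ℕ) (μZ : C → C → ℕ) (w c : C) : C → C → ℕ :=
  fun x y =>
    if x = y then 0
    else if y = w then n - μZ w x
    else if x = w then μZ w y
    else if x = c then n - μZ y x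
    else if y = c then μZ x y
    else if ((Fintype.equivFin C) x : ℕ) < ((Fintype.equivFin C) y : ℕ) then n - μZ y x
    else μZ x y

lemma advC_ext (n : ℕ) (μZ : C → C → ℕ) (w c : C) (hP : IsPartialW n μZ) :
    ExtW μZ (advC n μZ w c) := by
  intro x y
  by_cases hxy : x = y
  · subst hxy; simp [advC, hP.1 x]
  · have h1 := hP.2 x y hxy
    unfold advC
    split_ifs <;> (try subst_vars) <;> first | omega | simp_all

lemma advC_complete (n : ℕ) (μZ : C → C → ℕ) (w c : C) (hP : IsPartialW n μZ) :
    IsCompleteW n (advC n μZ w c) := by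
  constructor
  · intro x; simp [advC]
  · intro x y hxy
    have h1 := hP.2 x y hxy
    have h2 := hP.2 y x (Ne.symm hxy)
    have he : ((Fintype.equivFin C) x : ℕ) ≠ ((Fintype.equivFin C) y : ℕ) :=
      fun h => hxy ((Fintype.equivFin C).injective (Fin.val_injective h))
    unfold advC
    split_ifs <;> (try subst_vars) <;> first | omega | simp_all

lemma advC_w (n : ℕ) (μZ : C → C → ℕ) (w c : C) {y : C} (hyw : y ≠ w) :
    advC n μZ w c w y = μZ w y := by
  unfold advC
  rw [if_neg (fun h => hyw h.symm), if_neg hyw, if_pos rfl]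

lemma advC_c (n : ℕ) (μZ : C → C → ℕ) (w c : C) {y : C} (hyc : y ≠ c) (hwc : w ≠ c) :
    advC n μZ w c c y = n - μZ y c := by
  by_cases hyw : y = w
  · subst hyw
    unfold advC
    rw [if_neg (fun h => hwc h.symm), if_pos rfl]
  · unfold advC
    rw [if_neg (fun h => hyc h.symm), if_neg hyw, if_neg (Ne.symm hwc), if_pos rfl]

end Aux

section Lower
open Finset
variable {C : Type*} [Fintype C] [DecidableEq C]

lemma partial_of_ext {n : ℕ} {μ μZ : C → C → ℕ} (hG : IsCompleteW n μ) (hE : ExtW μZ μ) :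
    IsPartialW n μZ := by
  constructor
  · intro x
    have := hE x x
    have := hG.1 x
    omega
  · intro x y hxy
    have h1 := hE x y
    have h2 := hE y x
    have := hG.2 x y hxy
    omega

/-- Necessary winner implies every other candidate has a blocking incoming edge. -/
lemma blocking {n : ℕ} (hcard : 1 < Fintype.card C)
    {μZ : C → C → ℕ} (hP : IsPartialW n μZ) {w : C} (hNW : NWMM n μZ w)
    {c : C} (hc : c ≠ w) :
    ∃ c', c' ≠ c ∧ n - mmScore μZ w ≤ μZ c' c := by
  by_contra hcon
  push_neg at hcon
  set s := mmScore μZ w with hs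
  have hIn : InMM (advC n μZ w c) w :=
    hNW _ (advC_ext n μZ w c hP) (advC_complete n μZ w c hP)
  have hsw : mmScore (advC n μZ w c) w = s := by
    unfold mmScore
    congr 1
    ext k
    constructor
    · rintro ⟨c', h1, h2⟩
      exact ⟨c', h1, by rwa [advC_w n μZ w c h1] at h2⟩
    · rintro ⟨c', h1, h2⟩
      exact ⟨c', h1, by rwa [advC_w n μZ w c h1]⟩
  have hsc : s + 1 ≤ mmScore (advC n μZ w c) c := by
    apply le_mmScore (Fintype.exists_ne_of_one_lt_card hcard c)
    intro y hy
    rw [advC_c n μZ w c hy (Ne.symm hc)]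
    have h1 := hcon y hy
    have h2 : μZ y c ≤ n := by
      have := hP.2 y c (fun h => hy (h ▸ rfl))
      omega
    omega
  have := hIn c
  omega

lemma lower_bound {n : ℕ} (hn : 0 < n) (hcard : 1 < Fintype.card C)
    {μ : C → C → ℕ} (hG : IsCompleteW n μ) {w : C}
    {μZ : C → C → ℕ} (hE : ExtW μZ μ) (hNW : NWMM n μZ w) :
    n * (Fintype.card C - 1) -
        min (mmScore μ w) (n / 2) *
          (Finset.univ.filter
            (fun c : C => n - min (mmScore μ w) (n / 2) ≤ μ w c)).card ≤ sizeW μZ := by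
  have hP : IsPartialW n μZ := partial_of_ext hG hE
  set σ := mmScore μ w with hσ
  set t := min σ (n / 2) with ht
  set s := mmScore μZ w with hs
  set u := min s (n - s) with hu
  -- s ≤ σ and s ≤ n
  obtain ⟨c₀, hc₀, he₀⟩ := exists_mmScore_eq (μ := μ) (c := w)
    (Fintype.exists_ne_of_one_lt_card hcard w)
  have hsσ : s ≤ σ := by
    calc s ≤ μZ w c₀ := mmScore_le_of_ne hc₀
    _ ≤ μ w c₀ := hE w c₀
    _ = σ := he₀
  have hσn : σ ≤ n := by
    have := hG.2 w c₀ (Ne.symm hc₀)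
    omega
  have hut : u ≤ t := by omega
  -- pointwise column bound
  have hcol : ∀ y ∈ Finset.univ.erase w,
      n - (if n - u ≤ μ w y then u else 0) ≤ ∑ x : C, μZ x y := by
    intro y hy
    have hyw : y ≠ w := (Finset.mem_erase.1 hy).1
    obtain ⟨c', hc'y, hge⟩ := blocking hcard hP hNW hyw
    have hswy : s ≤ μZ w y := mmScore_le_of_ne hyw
    by_cases hcw : c' = w
    · rw [hcw] at hge
      have h1 : n - u ≤ μZ w y := by omega
      have h2 : n - u ≤ μ w y := le_trans h1 (hE w y)
      rw [if_pos h2]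
      calc n - u ≤ μZ w y := h1
      _ ≤ ∑ x : C, μZ x y :=
          Finset.single_le_sum (f := fun x => μZ x y) (fun x _ => Nat.zero_le _) (Finset.mem_univ w)
    · have hpair : μZ w y + μZ c' y ≤ ∑ x : C, μZ x y := by
        have hsub : ({w, c'} : Finset C) ⊆ Finset.univ := Finset.subset_univ _
        have := Finset.sum_le_sum_of_subset (f := fun x => μZ x y) hsub
        rwa [Finset.sum_pair (fun h => hcw h.symm)] at this
      have hsn : s ≤ n := by
        have := hP.2 w y (Ne.symm hyw)
        omega
      have : n ≤ ∑ x : C, μZ x y := by omega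
      split <;> omega
  -- sum it up
  have hsum : ∑ y ∈ Finset.univ.erase w, (n - (if n - u ≤ μ w y then u else 0))
      ≤ sizeW μZ := by
    calc ∑ y ∈ Finset.univ.erase w, (n - (if n - u ≤ μ w y then u else 0))
        ≤ ∑ y ∈ Finset.univ.erase w, ∑ x : C, μZ x y := Finset.sum_le_sum hcol
    _ ≤ ∑ y : C, ∑ x : C, μZ x y :=
        Finset.sum_le_sum_of_subset (Finset.subset_univ _)
    _ = sizeW μZ := (Finset.sum_comm)
  refine le_trans ?_ hsum
  rw [Finset.sum_tsub_distrib _ (fun y _ => by split <;> omega),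
    Finset.sum_const, smul_eq_mul, Finset.card_erase_of_mem (Finset.mem_univ w),
    Finset.card_univ]
  have hfsub : (Finset.univ.erase w).filter (fun y => n - u ≤ μ w y) ⊆
      Finset.univ.filter (fun c : C => n - t ≤ μ w c) := by
    intro y hy
    rw [Finset.mem_filter] at *
    exact ⟨Finset.mem_univ y, by have := hy.2; omega⟩
  have h2 : ∑ y ∈ Finset.univ.erase w, (if n - u ≤ μ w y then u else 0)
      ≤ t * (Finset.univ.filter (fun c : C => n - t ≤ μ w c)).card := by
    rw [← Finset.sum_filter]
    calc ∑ _y ∈ (Finset.univ.erase w).filter (fun y => n - u ≤ μ w y), u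
        = ((Finset.univ.erase w).filter (fun y => n - u ≤ μ w y)).card * u := by
          rw [Finset.sum_const, smul_eq_mul]
    _ ≤ (Finset.univ.filter (fun c : C => n - t ≤ μ w c)).card * t :=
        Nat.mul_le_mul (Finset.card_le_card hfsub) hut
    _ = t * (Finset.univ.filter (fun c : C => n - t ≤ μ w c)).card := Nat.mul_comm _ _
  calc n * (Fintype.card C - 1) -
        t * (Finset.univ.filter (fun c : C => n - t ≤ μ w c)).card
      = (Fintype.card C - 1) * n -
        t * (Finset.univ.filter (fun c : C => n - t ≤ μ w c)).card := by
        rw [Nat.mul_comm]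
    _ ≤ (Fintype.card C - 1) * n -
        ∑ y ∈ Finset.univ.erase w, (if n - u ≤ μ w y then u else 0) :=
        Nat.sub_le_sub_left h2 _

end Lower

section Upper
open Finset
variable {C : Type*} [Fintype C] [DecidableEq C]

lemma construction {n : ℕ} (hn : 0 < n) (hcard : 1 < Fintype.card C)
    {μ : C → C → ℕ} (hG : IsCompleteW n μ) {w : C} (hw : InMM μ w) :
    ∃ μZ : C → C → ℕ, ExtW μZ μ ∧ NWMM n μZ w ∧
      sizeW μZ = n * (Fintype.card C - 1) -
        min (mmScore μ w) (n / 2) *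
          (Finset.univ.filter
            (fun c : C => n - min (mmScore μ w) (n / 2) ≤ μ w c)).card := by
  classical
  set σ := mmScore μ w with hσ
  set t := min σ (n / 2) with ht
  obtain ⟨c₀, hc₀, he₀⟩ := exists_mmScore_eq (μ := μ) (c := w)
    (Fintype.exists_ne_of_one_lt_card hcard w)
  have hσn : σ ≤ n := by
    have := hG.2 w c₀ (Ne.symm hc₀)
    omega
  have hσle : ∀ c : C, c ≠ w → σ ≤ μ w c := fun c hc =>
    mmScore_le_of_ne (μ := μ) hc
  have hbex : ∀ c : C, c ≠ w → μ w c < n - t →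
      ∃ c', c' ≠ c ∧ c' ≠ w ∧ n - t ≤ μ c' c := by
    intro c hc hlt
    have h1 : σ ≤ μ w c := hσle c hc
    have htσ : t = σ := by omega
    obtain ⟨c₁, hc₁, he₁⟩ := exists_mmScore_eq (μ := μ) (c := c)
      (Fintype.exists_ne_of_one_lt_card hcard c)
    have h2 : μ c c₁ ≤ t := by
      rw [he₁, htσ]
      exact hw c
    have h3 : n - t ≤ μ c₁ c := by
      have := hG.2 c c₁ (Ne.symm hc₁)
      omega
    refine ⟨c₁, hc₁, ?_, h3⟩
    intro hcw
    rw [hcw] at h3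
    omega
  let b : C → C := fun c =>
    if h : c ≠ w ∧ μ w c < n - t then (hbex c h.1 h.2).choose else w
  have hbspec : ∀ c : C, (h : c ≠ w ∧ μ w c < n - t) →
      b c ≠ c ∧ b c ≠ w ∧ n - t ≤ μ (b c) c := by
    intro c h
    have := (hbex c h.1 h.2).choose_spec
    simp only [b, dif_pos h]
    exact this
  set A : C → ℕ := fun c => if n - t ≤ μ w c then n - t else t with hA
  set μZ : C → C → ℕ := fun x y =>
    (if x = w ∧ y ≠ w then A y else 0) +
    (if y ≠ w ∧ μ w y < n - t ∧ x = b y then n - t else 0) with hμZ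
  have htA : ∀ y : C, t ≤ A y := by
    intro y
    show t ≤ if n - t ≤ μ w y then n - t else t
    split <;> omega
  have hAy : ∀ y : C, y ≠ w → A y ≤ μ w y := by
    intro y hy
    show (if n - t ≤ μ w y then n - t else t) ≤ μ w y
    split
    · omega
    · exact le_trans (by omega) (hσle y hy)
  have hμZw : ∀ y : C, y ≠ w → μZ w y = A y := by
    intro y hy
    show (if w = w ∧ y ≠ w then A y else 0) +
      (if y ≠ w ∧ μ w y < n - t ∧ w = b y then n - t else 0) = A y
    rw [if_pos ⟨rfl, hy⟩, if_neg, Nat.add_zero]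
    rintro ⟨h1, h2, h3⟩
    exact (hbspec y ⟨h1, h2⟩).2.1 h3.symm
  refine ⟨μZ, ?_, ?_, ?_⟩
  · -- ExtW μZ μ
    intro x y
    show (if x = w ∧ y ≠ w then A y else 0) +
      (if y ≠ w ∧ μ w y < n - t ∧ x = b y then n - t else 0) ≤ μ x y
    split_ifs with h1 h2 h2
    · exfalso
      exact (hbspec y ⟨h2.1, h2.2.1⟩).2.1 (h2.2.2.symm.trans h1.1)
    · obtain ⟨h1a, h1b⟩ := h1
      subst h1a
      have := hAy y h1b
      omega
    · obtain ⟨h2a, h2b, h2c⟩ := h2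
      subst h2c
      have := (hbspec y ⟨h2a, h2b⟩).2.2
      omega
    · omega
  · -- NWMM
    intro μ' hext hcomp
    intro c
    by_cases hc : c = w
    · subst hc; exact le_refl _
    · have hwge : t ≤ mmScore μ' w := by
        apply le_mmScore (Fintype.exists_ne_of_one_lt_card hcard w)
        intro y hy
        calc t ≤ A y := htA y
        _ = μZ w y := (hμZw y hy).symm
        _ ≤ μ' w y := hext w y
      have hcle : mmScore μ' c ≤ t := by
        by_cases hgood : n - t ≤ μ w c
        · have h1 : n - t ≤ μZ w c := by
            rw [hμZw c hc]
            show n - t ≤ if n - t ≤ μ w c then n - t else t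
            rw [if_pos hgood]
          have h2 : n - t ≤ μ' w c := le_trans h1 (hext w c)
          have h3 := hcomp.2 c w hc
          have h4 : mmScore μ' c ≤ μ' c w :=
            mmScore_le_of_ne (fun h => hc h.symm)
          omega
        · have hb1 := hbspec c ⟨hc, by omega⟩
          have h1 : n - t ≤ μZ (b c) c := by
            have he : (if c ≠ w ∧ μ w c < n - t ∧ b c = b c then n - t else 0) = n - t :=
              if_pos ⟨hc, by omega, rfl⟩
            calc n - t = _ := he.symm
            _ ≤ (if b c = w ∧ c ≠ w then A c else 0) +
                (if c ≠ w ∧ μ w c < n - t ∧ b c = b c then n - t else 0) :=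
              Nat.le_add_left _ _
            _ = μZ (b c) c := rfl
          have h2 : n - t ≤ μ' (b c) c := le_trans h1 (hext (b c) c)
          have h3 := hcomp.2 c (b c) (fun h => hb1.1 h.symm)
          have h4 : mmScore μ' c ≤ μ' c (b c) := mmScore_le_of_ne hb1.1
          have h5 : t ≤ n := by omega
          omega
      exact le_trans hcle hwge
  · -- size computation
    have hsplit : sizeW μZ =
        (∑ x : C, ∑ y : C, (if x = w ∧ y ≠ w then A y else 0)) +
        (∑ x : C, ∑ y : C, (if y ≠ w ∧ μ w y < n - t ∧ x = b y then n - t else 0)) := by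
      unfold sizeW
      rw [← Finset.sum_add_distrib]
      apply Finset.sum_congr rfl
      intro x _
      rw [← Finset.sum_add_distrib]
    have h1 : (∑ x : C, ∑ y : C, (if x = w ∧ y ≠ w then A y else 0)) =
        ∑ y : C, (if y ≠ w then A y else 0) := by
      rw [Finset.sum_eq_single_of_mem w (Finset.mem_univ w)]
      · apply Finset.sum_congr rfl
        intro y _
        by_cases hy : y = w
        · simp [hy]
        · simp [hy]
      · intro x _ hx
        apply Finset.sum_eq_zero
        intro y _
        rw [if_neg (fun h => hx h.1)]
    have h2 : (∑ x : C, ∑ y : C, (if y ≠ w ∧ μ w y < n - t ∧ x = b y then n - t else 0)) =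
        ∑ y : C, (if y ≠ w ∧ μ w y < n - t then n - t else 0) := by
      rw [Finset.sum_comm]
      apply Finset.sum_congr rfl
      intro y _
      by_cases hy : y ≠ w ∧ μ w y < n - t
      · rw [if_pos hy]
        have hcong : ∀ x : C, (if y ≠ w ∧ μ w y < n - t ∧ x = b y then n - t else 0) =
            (if x = b y then n - t else 0) := by
          intro x
          by_cases hxb : x = b y
          · rw [if_pos ⟨hy.1, hy.2, hxb⟩, if_pos hxb]
          · rw [if_neg (fun h => hxb h.2.2), if_neg hxb]
        rw [Finset.sum_congr rfl (fun x _ => hcong x),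
          Finset.sum_ite_eq' Finset.univ (b y) (fun _ => n - t),
          if_pos (Finset.mem_univ _)]
      · rw [if_neg hy]
        apply Finset.sum_eq_zero
        intro x _
        rw [if_neg (fun h => hy ⟨h.1, h.2.1⟩)]
    have h3 : sizeW μZ = ∑ y : C,
        ((if y ≠ w then A y else 0) + (if y ≠ w ∧ μ w y < n - t then n - t else 0)) := by
      rw [hsplit, h1, h2, ← Finset.sum_add_distrib]
    have h4 : sizeW μZ = ∑ y : C,
        (if y ≠ w then (n - (if n - t ≤ μ w y then t else 0)) else 0) := by
      rw [h3]
      apply Finset.sum_congr rfl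
      intro y _
      by_cases hy : y = w
      · simp [hy]
      · rw [if_pos hy, if_pos hy]
        by_cases hge : n - t ≤ μ w y
        · rw [if_neg (fun h => by omega : ¬(y ≠ w ∧ μ w y < n - t)), if_pos hge]
          have : A y = n - t := if_pos hge
          omega
        · rw [if_pos ⟨hy, by omega⟩, if_neg hge]
          have : A y = t := if_neg hge
          omega
    rw [h4, ← Finset.sum_filter, Finset.filter_ne' Finset.univ w,
      Finset.sum_tsub_distrib _ (fun y _ => by split <;> omega),
      Finset.sum_const, smul_eq_mul, Finset.card_erase_of_mem (Finset.mem_univ w),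
      Finset.card_univ, ← Finset.sum_filter]
    have hfeq : (Finset.univ.erase w).filter (fun y => n - t ≤ μ w y) =
        Finset.univ.filter (fun c : C => n - t ≤ μ w c) := by
      ext y
      simp only [Finset.mem_filter, Finset.mem_erase, Finset.mem_univ, true_and]
      constructor
      · rintro ⟨⟨_, _⟩, h⟩
        exact h
      · intro h
        refine ⟨⟨?_, trivial⟩, h⟩
        intro hyw
        rw [hyw, hG.1 w] at h
        omega
    rw [hfeq, Finset.sum_const, smul_eq_mul, Nat.mul_comm n (Fintype.card C - 1),
      Nat.mul_comm _ t]
end Upper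

/-- Size of smallest minimal supports for maximin: with `t = min(σ_w, ⌊n/2⌋)`,
every SMS `μX` for `w ∈ MM(μ)` has size
`n(m-1) - t · |{c : μ(w,c) ≥ n - t}|`. -/
theorem stmt8 {C : Type*} [Fintype C] [DecidableEq C] [Nonempty C]
    (n m : ℕ) (hn : 0 < n) (hm : Fintype.card C = m)
    (μ : C → C → ℕ) (hG : IsCompleteW n μ)
    (w : C) (hw : InMM μ w) (μX : C → C → ℕ) (hX : SMSMM n μ μX w) :
    sizeW μX =
      n * (m - 1) -
        min (mmScore μ w) (n / 2) *
          (Finset.univ.filter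
            (fun c : C => n - min (mmScore μ w) (n / 2) ≤ μ w c)).card := by
  classical
  by_cases hcard : 1 < Fintype.card C
  · -- main case: at least two candidates
    obtain ⟨μZ, hZE, hZN, hZsize⟩ := construction hn hcard hG hw
    set S : Set ℕ :=
      {k | ∃ μ'' : C → C → ℕ, ExtW μ'' μZ ∧ NWMM n μ'' w ∧ sizeW μ'' = k} with hS
    have hSne : S.Nonempty := ⟨sizeW μZ, μZ, fun x y => le_refl _, hZN, rfl⟩
    obtain ⟨μs, hsE, hsN, hssz⟩ := Nat.sInf_mem hSne
    have hMS : MSMM n μ μs w := by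
      refine ⟨fun x y => le_trans (hsE x y) (hZE x y), hsN, ?_⟩
      intro μY hYE hYN hYnw
      have hmem : sizeW μY ∈ S := ⟨μY, fun x y => le_trans (hYE x y) (hsE x y), hYnw, rfl⟩
      have hle := Nat.sInf_le hmem
      have hex : ∃ x y, μY x y < μs x y := by
        by_contra hcon
        push_neg at hcon
        apply hYN
        funext x y
        exact le_antisymm (hYE x y) (hcon x y)
      obtain ⟨x₀, y₀, hlt⟩ := hex
      have hstrict : sizeW μY < sizeW μs := by
        unfold sizeW
        apply Finset.sum_lt_sum
        · intro i _
          exact Finset.sum_le_sum fun j _ => hYE i j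
        · exact ⟨x₀, Finset.mem_univ _,
            Finset.sum_lt_sum (fun j _ => hYE x₀ j) ⟨y₀, Finset.mem_univ _, hlt⟩⟩
      rw [hssz] at hstrict
      omega
    have hub : sizeW μX ≤ sizeW μZ := by
      refine le_trans (hX.2 μs hMS) ?_
      rw [hssz]
      exact Nat.sInf_le ⟨μZ, fun x y => le_refl _, hZN, rfl⟩
    have h1 : sizeW μX ≤ n * (Fintype.card C - 1) -
        min (mmScore μ w) (n / 2) *
          (Finset.univ.filter
            (fun c : C => n - min (mmScore μ w) (n / 2) ≤ μ w c)).card :=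
      hZsize ▸ hub
    have h2 := lower_bound hn hcard hG hX.1.1 hX.1.2.1
    rw [← hm]
    exact le_antisymm h1 h2
  · -- degenerate case: exactly one candidate
    have hc1 : Fintype.card C = 1 := by
      have := Fintype.card_pos (α := C)
      omega
    have hall : ∀ c : C, c = w := fun c =>
      Fintype.card_le_one_iff.1 (by omega) c w
    have hNW0 : NWMM n (fun _ _ => 0) w := by
      intro μ' _ _ c'
      rw [hall c']
    have hX0 : μX = fun _ _ => (0 : ℕ) := by
      by_contra hne
      exact hX.1.2.2 (fun _ _ => 0) (fun x y => Nat.zero_le _) (fun h => hne h.symm) hNW0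
    have hm1 : m = 1 := by rw [← hm, hc1]
    have hset : {k : ℕ | ∃ c' : C, c' ≠ w ∧ μ w c' = k} = ∅ := by
      ext k
      simp only [Set.mem_setOf_eq, Set.mem_empty_iff_false, iff_false]
      rintro ⟨c', hc', _⟩
      exact hc' (hall c')
    have hscore : mmScore μ w = 0 := by
      unfold mmScore
      rw [hset, Nat.sInf_empty]
    have hfilt : (Finset.univ.filter
        (fun c : C => n - min (mmScore μ w) (n / 2) ≤ μ w c)) = ∅ := by
      apply Finset.filter_eq_empty_iff.2
      intro c _
      rw [hall c, hG.1 w, hscore]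
      omega
    rw [hfilt, hscore, hm1, hX0]
    simp [sizeW]
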